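/- Let β, β̃ ∈ ℝ^p both be nonzero, set Δ = β̃ − β, let k ∈ {1,…,p}, and define w_k(β) = −(1/2)(‖β‖₂² I + 2ββᵀ)^{-1} e_k and w_k(β̃) = −(1/2)(‖β̃‖₂² I + 2β̃β̃ᵀ)^{-1} e_k. Then ‖w_k(β̃) − w_k(β)‖₂ ≤ (1/2)|1/‖β‖₂² − 1/‖β̃‖₂²| + (|β̃_k|/(3‖β̃‖₂⁴))‖Δ‖₂ + (1/3)|β̃_k/‖β̃‖₂⁴ − β_k/‖β‖₂⁴| · ‖β‖₂. -/
import Mathlib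


open MeasureTheory ProbabilityTheory

noncomputable section

/-- Euclidean dot product on `ℝ^p`. -/
def dot {p : ℕ} (u v : Fin p → ℝ) : ℝ := ∑ i, u i * v i

/-- Euclidean norm on `ℝ^p`. -/
def nrm {p : ℕ} (v : Fin p → ℝ) : ℝ := Real.sqrt (∑ i, (v i)^2)

/-- The matrix `‖b‖₂² I + 2 b bᵀ` (population Fisher information / Hessian). -/
def fisherM {p : ℕ} (b : Fin p → ℝ) : Matrix (Fin p) (Fin p) ℝ :=
  (nrm b ^ 2) • (1 : Matrix (Fin p) (Fin p) ℝ) + (2:ℝ) • Matrix.vecMulVec b b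

/-- The correction direction `w_k(b) = -(1/2) (‖b‖₂² I + 2 b bᵀ)⁻¹ e_k`. -/
def wvec {p : ℕ} (b : Fin p → ℝ) (k : Fin p) : Fin p → ℝ :=
  (-(1/2) : ℝ) • (fisherM b)⁻¹.mulVec (Pi.single k 1)

/-- Operator (spectral) norm of a matrix acting on Euclidean space. -/
def opNorm {p : ℕ} (A : Matrix (Fin p) (Fin p) ℝ) : ℝ :=
  ‖LinearMap.toContinuousLinearMap (Matrix.toEuclideanLin A)‖

/-- Restriction of a vector to a coordinate set `S` (zero outside `S`). -/
def restr {p : ℕ} (S : Finset (Fin p)) (v : Fin p → ℝ) : Fin p → ℝ :=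
  fun i => if i ∈ S then v i else 0

/-- Gradient of the phase-retrieval objective
`f(b) = (1/(4n)) ∑ⱼ ((xⱼᵀb)² - yⱼ)²`, namely
`∇f(b) = (1/n) ∑ⱼ ((xⱼᵀb)² - yⱼ)(xⱼᵀb) xⱼ`. -/
def gradf {p n : ℕ} (x : Fin n → Fin p → ℝ) (y : Fin n → ℝ) (b : Fin p → ℝ) : Fin p → ℝ :=
  (1/(n:ℝ)) • ∑ j, (((dot (x j) b)^2 - y j) * dot (x j) b) • x j

lemma vmv_mul {p : ℕ} (u v w z : Fin p → ℝ) :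
    Matrix.vecMulVec u v * Matrix.vecMulVec w z = (∑ i, v i * w i) • Matrix.vecMulVec u z := by
  ext i j
  simp [Matrix.mul_apply, Matrix.vecMulVec_apply, Finset.sum_mul]
  exact Finset.sum_congr rfl fun l _ => by ring

lemma vmv_mulVec {p : ℕ} (u v w : Fin p → ℝ) :
    (Matrix.vecMulVec u v).mulVec w = (∑ i, v i * w i) • u := by
  ext i
  simp [Matrix.mulVec, dotProduct, Matrix.vecMulVec_apply]
  rw [Finset.sum_mul]
  exact Finset.sum_congr rfl fun l _ => by ring

lemma nrm_sq {p : ℕ} (b : Fin p → ℝ) : nrm b ^ 2 = ∑ i, (b i)^2 := by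
  rw [nrm, Real.sq_sqrt]
  positivity

lemma sum_sq_pos {p : ℕ} {b : Fin p → ℝ} (hb : b ≠ 0) : 0 < ∑ i, (b i)^2 := by
  obtain ⟨i, hi⟩ := Function.ne_iff.mp hb
  exact Finset.sum_pos' (fun j _ => sq_nonneg _) ⟨i, Finset.mem_univ i, by simpa [sq_abs] using pow_pos (abs_pos.mpr hi) 2⟩

lemma fisher_inv {p : ℕ} {b : Fin p → ℝ} (hb : b ≠ 0) :
    (fisherM b)⁻¹ = (1 / nrm b ^ 2) • (1 : Matrix (Fin p) (Fin p) ℝ)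
      + (-(2 / (3 * (nrm b ^ 2)^2))) • Matrix.vecMulVec b b := by
  have ha : (0:ℝ) < nrm b ^ 2 := nrm_sq b ▸ sum_sq_pos hb
  set a := nrm b ^ 2 with hav
  apply Matrix.inv_eq_right_inv
  rw [fisherM, ← hav]
  rw [add_mul, mul_add, mul_add]
  rw [Matrix.smul_mul, Matrix.smul_mul, Matrix.smul_mul, Matrix.smul_mul,
    Matrix.mul_smul, Matrix.mul_smul, Matrix.mul_smul, Matrix.mul_smul,
    one_mul, mul_one, vmv_mul]
  have hbb : (∑ i, b i * b i) = a := by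
    rw [hav, nrm_sq]; exact Finset.sum_congr rfl fun i _ => (sq (b i)).symm
  rw [hbb]
  rw [smul_smul, smul_smul, smul_smul, smul_smul, smul_smul]
  have h1 : a * (1/a) = 1 := by field_simp
  have h2 : a * -(2 / (3 * a ^ 2)) + (2 * (1 / a) + 2 * -(2 / (3 * a ^ 2)) * a) = 0 := by
    field_simp; ring
  rw [h1, one_smul, one_mul, add_assoc, ← add_smul, ← add_smul, h2, zero_smul, add_zero]

lemma wvec_eq {p : ℕ} {b : Fin p → ℝ} (hb : b ≠ 0) (k : Fin p) :
    wvec b k = (-(1 / (2 * nrm b ^ 2))) • (Pi.single k 1 : Fin p → ℝ)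
      + (b k / (3 * nrm b ^ 4)) • b := by
  have ha : (0:ℝ) < nrm b ^ 2 := nrm_sq b ▸ sum_sq_pos hb
  rw [wvec, fisher_inv hb, Matrix.add_mulVec, Matrix.smul_mulVec,
    Matrix.smul_mulVec, Matrix.one_mulVec, vmv_mulVec]
  have hk : (∑ i, b i * (Pi.single k 1 : Fin p → ℝ) i) = b k := by
    simp [Pi.single_apply]
  rw [hk]
  have hne : nrm b ≠ 0 := by intro h; rw [h] at ha; simp at ha
  ext i
  simp only [Pi.add_apply, Pi.smul_apply, smul_eq_mul]
  field_simp
  ring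

lemma nrm_eq_norm {p : ℕ} (v : Fin p → ℝ) :
    nrm v = ‖(WithLp.equiv 2 (Fin p → ℝ)).symm v‖ := by
  rw [EuclideanSpace.norm_eq, nrm]
  congr 1
  exact Finset.sum_congr rfl fun i _ => by rw [Real.norm_eq_abs, sq_abs]; rfl

lemma nrm_add_le {p : ℕ} (u v : Fin p → ℝ) : nrm (u + v) ≤ nrm u + nrm v := by
  rw [nrm_eq_norm, nrm_eq_norm, nrm_eq_norm]
  exact norm_add_le ((WithLp.equiv 2 (Fin p → ℝ)).symm u) ((WithLp.equiv 2 (Fin p → ℝ)).symm v)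

lemma nrm_smul {p : ℕ} (c : ℝ) (v : Fin p → ℝ) : nrm (c • v) = |c| * nrm v := by
  rw [nrm_eq_norm, nrm_eq_norm]
  rw [show (WithLp.equiv 2 (Fin p → ℝ)).symm (c • v)
      = c • (WithLp.equiv 2 (Fin p → ℝ)).symm v from rfl]
  rw [norm_smul, Real.norm_eq_abs]

lemma nrm_single {p : ℕ} (k : Fin p) : nrm (Pi.single k 1 : Fin p → ℝ) = 1 := by
  rw [nrm]
  have : (∑ i, ((Pi.single k 1 : Fin p → ℝ) i)^2) = 1 := by
    simp [Pi.single_apply]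
  rw [this, Real.sqrt_one]


/-- Bound on the difference between correction directions computed at `β̃` and at `β`:
`‖w_k(β̃) − w_k(β)‖₂ ≤ (1/2)|1/‖β‖₂² − 1/‖β̃‖₂²| + (|β̃_k|/(3‖β̃‖₂⁴))‖Δ‖₂
  + (1/3)|β̃_k/‖β̃‖₂⁴ − β_k/‖β‖₂⁴|‖β‖₂`, where `Δ = β̃ − β`. -/
theorem stmt_17 {p : ℕ} (β βt : Fin p → ℝ) (hβ : β ≠ 0) (hβt : βt ≠ 0) (k : Fin p) :
    nrm (wvec βt k - wvec β k)
      ≤ (1/2) * |1 / nrm β ^ 2 - 1 / nrm βt ^ 2|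
        + (|βt k| / (3 * nrm βt ^ 4)) * nrm (βt - β)
        + (1/3) * |βt k / nrm βt ^ 4 - β k / nrm β ^ 4| * nrm β := by
  have ha : (0:ℝ) < nrm β ^ 2 := nrm_sq β ▸ sum_sq_pos hβ
  have hat : (0:ℝ) < nrm βt ^ 2 := nrm_sq βt ▸ sum_sq_pos hβt
  have hne : nrm β ≠ 0 := by intro h; rw [h] at ha; simp at ha
  have htne : nrm βt ≠ 0 := by intro h; rw [h] at hat; simp at hat
  set c1 : ℝ := (1/2) * (1 / nrm β ^ 2 - 1 / nrm βt ^ 2) with hc1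
  set c2 : ℝ := βt k / (3 * nrm βt ^ 4) with hc2
  set c3 : ℝ := (1/3) * (βt k / nrm βt ^ 4 - β k / nrm β ^ 4) with hc3
  have key : wvec βt k - wvec β k
      = c1 • (Pi.single k 1 : Fin p → ℝ) + c2 • (βt - β) + c3 • β := by
    rw [wvec_eq hβt k, wvec_eq hβ k]
    ext i
    simp only [Pi.add_apply, Pi.sub_apply, Pi.smul_apply, smul_eq_mul, hc1, hc2, hc3]
    field_simp
    ring
  rw [key]
  calc nrm (c1 • (Pi.single k 1 : Fin p → ℝ) + c2 • (βt - β) + c3 • β)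
      ≤ nrm (c1 • (Pi.single k 1 : Fin p → ℝ) + c2 • (βt - β)) + nrm (c3 • β) :=
        nrm_add_le _ _
    _ ≤ nrm (c1 • (Pi.single k 1 : Fin p → ℝ)) + nrm (c2 • (βt - β)) + nrm (c3 • β) := by
        gcongr; exact nrm_add_le _ _
    _ = |c1| * 1 + |c2| * nrm (βt - β) + |c3| * nrm β := by
        rw [nrm_smul, nrm_smul, nrm_smul, nrm_single]
    _ = (1/2) * |1 / nrm β ^ 2 - 1 / nrm βt ^ 2|
        + (|βt k| / (3 * nrm βt ^ 4)) * nrm (βt - β)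
        + (1/3) * |βt k / nrm βt ^ 4 - β k / nrm β ^ 4| * nrm β := by
        have h2 : |c1| = (1/2) * |1 / nrm β ^ 2 - 1 / nrm βt ^ 2| := by
          rw [hc1, abs_mul]; norm_num
        have h3 : |c2| = |βt k| / (3 * nrm βt ^ 4) := by
          rw [hc2, abs_div, abs_of_pos (by positivity : (0:ℝ) < 3 * nrm βt ^ 4)]
        have h4 : |c3| = (1/3) * |βt k / nrm βt ^ 4 - β k / nrm β ^ 4| := by
          rw [hc3, abs_mul]; norm_num
        rw [h2, h3, h4]; ring
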